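/- Suppose L is a free A-module and let b = (Z_α)_{α∈ι} and b' = (Z'_β)_{β∈ι} be two finite A-bases of L related by a constant change of frame: Z'_β = ∑_α (algebraMap ℝ A)(M β α) • Z_α for some matrix M : ι × ι → ℝ. Let ρ : L →ₗ[A] L be A-linear. Then the Weitzenböck operators defined from the two bases coincide: for all X, Y ∈ L, ∑_α (ρ(X) Y^α) • Z_α = ∑_β (ρ(X) Y'^β) • Z'_β, where Y^α and Y'^β are the coefficients of Y in the bases b and b' respectively. -/

import Mathlib

open scoped BigOperators

/-- A (parity-sign-free) quasi-connection on the module `L = Derivation ℝ A A` of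
vector fields: an `A`-linear anchor `ρ` together with an `ℝ`-bilinear map `∇`
satisfying `∇_{f•X} Y = f • ∇_X Y` and `∇_X (f•Y) = (ρ(X) f) • Y + f • ∇_X Y`. -/
def IsQuasiConnection {A : Type*} [CommRing A] [Algebra ℝ A]
    (nabla : Derivation ℝ A A → Derivation ℝ A A → Derivation ℝ A A)
    (rho : Derivation ℝ A A →ₗ[A] Derivation ℝ A A) : Prop :=
  (∀ X X' Y, nabla (X + X') Y = nabla X Y + nabla X' Y) ∧
  (∀ (c : ℝ) (X Y), nabla (c • X) Y = c • nabla X Y) ∧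
  (∀ X Y Y', nabla X (Y + Y') = nabla X Y + nabla X Y') ∧
  (∀ (c : ℝ) (X Y), nabla X (c • Y) = c • nabla X Y) ∧
  (∀ (f : A) (X Y), nabla (f • X) Y = f • nabla X Y) ∧
  (∀ (f : A) (X Y), nabla X (f • Y) = rho X f • Y + f • nabla X Y)

/-- The torsion `T(X,Y) := ∇_X Y − ∇_Y X − ρ(⁅ρ(X), ρ(Y)⁆)` of a quasi-connection. -/
def qcTorsion {A : Type*} [CommRing A] [Algebra ℝ A]
    (nabla : Derivation ℝ A A → Derivation ℝ A A → Derivation ℝ A A)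
    (rho : Derivation ℝ A A →ₗ[A] Derivation ℝ A A)
    (X Y : Derivation ℝ A A) : Derivation ℝ A A :=
  nabla X Y - nabla Y X - rho ⁅rho X, rho Y⁆

/-- The curvature `R(X,Y)Z := ∇_X(∇_Y Z) − ∇_Y(∇_X Z) − ∇_{ρ(⁅ρ(X), ρ(Y)⁆)} Z`. -/
def qcCurvature {A : Type*} [CommRing A] [Algebra ℝ A]
    (nabla : Derivation ℝ A A → Derivation ℝ A A → Derivation ℝ A A)
    (rho : Derivation ℝ A A →ₗ[A] Derivation ℝ A A)
    (X Y Z : Derivation ℝ A A) : Derivation ℝ A A :=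
  nabla X (nabla Y Z) - nabla Y (nabla X Z) - nabla (rho ⁅rho X, rho Y⁆) Z

/-- An affine connection on `L = Derivation ℝ A A`. -/
def IsAffineConnection {A : Type*} [CommRing A] [Algebra ℝ A]
    (nabla : Derivation ℝ A A → Derivation ℝ A A → Derivation ℝ A A) : Prop :=
  (∀ X X' Y, nabla (X + X') Y = nabla X Y + nabla X' Y) ∧
  (∀ (c : ℝ) (X Y), nabla (c • X) Y = c • nabla X Y) ∧
  (∀ X Y Y', nabla X (Y + Y') = nabla X Y + nabla X Y') ∧
  (∀ (c : ℝ) (X Y), nabla X (c • Y) = c • nabla X Y) ∧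
  (∀ (f : A) (X Y), nabla (f • X) Y = f • nabla X Y) ∧
  (∀ (f : A) (X Y), nabla X (f • Y) = X f • Y + f • nabla X Y)

/-- Proposition 2.40 (sign-free form): the Weitzenböck operator generated by `ρ` is
independent of the chosen parallelisation, for bases related by a constant
change of frame. -/
theorem weitzenboeck_independent_of_parallelisation {A : Type*} [CommRing A] [Algebra ℝ A]
    {ι : Type*} [Fintype ι]
    (b b' : Module.Basis ι A (Derivation ℝ A A))
    (M : ι → ι → ℝ)
    (hM : ∀ β, b' β = ∑ α, algebraMap ℝ A (M β α) • b α)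
    (rho : Derivation ℝ A A →ₗ[A] Derivation ℝ A A) :
    ∀ X Y : Derivation ℝ A A,
      ∑ α, rho X (b.repr Y α) • b α = ∑ β, rho X (b'.repr Y β) • b' β := by
  intro X Y
  classical
  have hrepr : ∀ β α, b.repr (b' β) α = algebraMap ℝ A (M β α) := by
    intro β α
    rw [hM β, map_sum, Finsupp.finset_sum_apply]
    simp only [map_smul, Finsupp.smul_apply, Module.Basis.repr_self, Finsupp.single_apply,
      smul_ite, smul_zero, smul_eq_mul, mul_one]
    simp
  have key : ∀ α, b.repr Y α = ∑ β, b'.repr Y β * algebraMap ℝ A (M β α) := by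
    intro α
    conv_lhs => rw [← b'.sum_repr Y]
    rw [map_sum, Finsupp.finset_sum_apply]
    refine Finset.sum_congr rfl fun β _ => ?_
    rw [map_smul, Finsupp.smul_apply, hrepr, smul_eq_mul]
  calc ∑ α, rho X (b.repr Y α) • b α
      = ∑ α, (∑ β, rho X (b'.repr Y β) * algebraMap ℝ A (M β α)) • b α := by
        refine Finset.sum_congr rfl fun α _ => ?_
        rw [key α, map_sum]
        congr 1
        refine Finset.sum_congr rfl fun β _ => ?_
        rw [Derivation.leibniz, Derivation.map_algebraMap]
        simp [smul_eq_mul, mul_comm]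
    _ = ∑ β, rho X (b'.repr Y β) • b' β := by
        simp only [hM, Finset.smul_sum, Finset.sum_smul, smul_smul]
        rw [Finset.sum_comm]
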